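/- arXiv:2302.04695 — 3 statements merged into one kernel-verified Lean document; each statement's English description precedes it below -/
import Mathlib

section
/- Let K = K_{n_1,...,n_k} be the complete k-partite graph with part sizes n_1,...,n_k and n = n_1 + ... + n_k vertices. Then the characteristic polynomial of its adjacency matrix is Φ_K(λ) = λ^{n-k} ( ∏_{i=1}^k (λ + n_i) - ∑_{i=1}^k n_i ∏_{j≠i} (λ + n_j) ). -/
open Finset

noncomputable def adjMat {V : Type*} [Fintype V] [DecidableEq V] (G : SimpleGraph V) :
    Matrix V V ℝ :=
  letI := Classical.decRel G.Adj
  G.adjMatrix ℝ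

/-- The spectral radius (largest adjacency eigenvalue) of a finite graph. -/
noncomputable def specRad {V : Type*} [Fintype V] [DecidableEq V] (G : SimpleGraph V) : ℝ :=
  sSup (spectrum ℝ (adjMat G))

/-- `G` contains no matching with `m` edges. -/
def MFree {V : Type*} (G : SimpleGraph V) (m : ℕ) : Prop :=
  ¬ ∃ M : SimpleGraph.Subgraph G, M.IsMatching ∧ M.edgeSet.ncard = m

open Matrix in
lemma adjMat_apply {V : Type*} [Fintype V] [DecidableEq V] (G : SimpleGraph V)
    [DecidableRel G.Adj] (v w : V) :
    adjMat G v w = if G.Adj v w then 1 else 0 := by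
  have h : adjMat G = G.adjMatrix ℝ := by
    unfold adjMat
    rw [Subsingleton.elim (Classical.decRel G.Adj) ‹DecidableRel G.Adj›]
  rw [h, SimpleGraph.adjMatrix_apply]

open Polynomial Matrix in
lemma eval_charpoly' {m : Type*} [Fintype m] [DecidableEq m] (M : Matrix m m ℝ) (x : ℝ) :
    Polynomial.eval x M.charpoly = (x • (1 : Matrix m m ℝ) - M).det := by
  rw [Matrix.charpoly, ← Polynomial.coe_evalRingHom, RingHom.map_det]
  congr 1
  ext i j
  by_cases h : i = j
  · subst h; simp [charmatrix_apply_eq, Matrix.one_apply]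
  · simp [charmatrix_apply_ne _ _ _ h, Matrix.one_apply_ne h]

open Matrix in
lemma det_blockDiagonal'_fin {k : ℕ} {m : Fin k → ℕ}
    (M : ∀ i, Matrix (Fin (m i)) (Fin (m i)) ℝ) :
    (blockDiagonal' M).det = ∏ i, (M i).det := by
  rw [(blockTriangular_blockDiagonal' M).det_fintype]
  refine Finset.prod_congr rfl fun i _ => ?_
  let e : Fin (m i) ≃ { a : Σ j, Fin (m j) // a.1 = i } :=
    { toFun := fun x => ⟨⟨i, x⟩, rfl⟩
      invFun := fun a => (congrArg m a.2) ▸ a.1.2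
      left_inv := fun x => rfl
      right_inv := by rintro ⟨⟨j, x⟩, rfl⟩; rfl }
  rw [← Matrix.det_submatrix_equiv_self e]
  congr 1
  ext x y
  simp [Matrix.toSquareBlock_def, e, Matrix.submatrix_apply]

noncomputable def Jm (m : ℕ) : Matrix (Fin m) (Fin m) ℝ := Matrix.of fun _ _ => 1

lemma Jm_mul_Jm (m : ℕ) : Jm m * Jm m = (m : ℝ) • Jm m := by
  ext i j; simp [Jm, Matrix.mul_apply]

lemma blk_mul_iblk (m : ℕ) {x : ℝ} (hx : x ≠ 0) (hxm : x + m ≠ 0) :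
    (x • 1 + Jm m) * (x⁻¹ • 1 - (x * (x + m))⁻¹ • Jm m) = 1 := by
  set c : ℝ := (x * (x + m))⁻¹ with hc
  have expand : (x • 1 + Jm m) * (x⁻¹ • 1 - c • Jm m)
      = (x * x⁻¹) • (1 : Matrix (Fin m) (Fin m) ℝ)
        + (x⁻¹ - x * c - c * m) • Jm m := by
    simp only [Matrix.add_mul, Matrix.mul_sub, Matrix.smul_mul, Matrix.mul_smul,
      Matrix.one_mul, Matrix.mul_one, Jm_mul_Jm, smul_smul, sub_smul]
    module
  rw [expand, mul_inv_cancel₀ hx, one_smul]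
  have : x⁻¹ - x * c - c * m = 0 := by
    rw [hc]; field_simp; ring
  rw [this, zero_smul, add_zero]

open Matrix in
lemma det_blk (m : ℕ) (hm : 1 ≤ m) {x : ℝ} (hx : x ≠ 0) :
    (x • 1 + Jm m).det = x ^ (m - 1) * (x + m) := by
  have h1 : x • (1 : Matrix (Fin m) (Fin m) ℝ) + Jm m
      = x • (1 + Matrix.replicateCol Unit (fun _ => x⁻¹) * Matrix.replicateRow Unit (fun _ => (1 : ℝ))) := by
    rw [smul_add]
    congr 1
    ext i j
    simp [Jm, Matrix.mul_apply, mul_inv_cancel₀ hx]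
  rw [h1, Matrix.det_smul, Matrix.det_one_add_replicateCol_mul_replicateRow]
  obtain ⟨m', rfl⟩ := Nat.exists_eq_add_of_le hm
  simp only [Fintype.card_fin, dotProduct, Finset.sum_const, Finset.card_univ, nsmul_eq_mul,
    one_mul, Nat.add_sub_cancel_left, Nat.add_sub_cancel]
  have hp : x ^ (1 + m') = x * x ^ m' := by rw [pow_add, pow_one]
  rw [hp]
  field_simp

open Matrix

open Polynomial in
/-- The characteristic polynomial of the adjacency matrix of the complete
`k`-partite graph with part sizes `n 0, …, n (k-1)`. -/
theorem charpoly_completeMultipartite (k : ℕ) (n : Fin k → ℕ) (hn : ∀ i, 1 ≤ n i) :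
    (adjMat (SimpleGraph.completeMultipartiteGraph (fun i => Fin (n i)))).charpoly =
      X ^ ((∑ i, n i) - k) *
        (∏ i, (X + C (n i : ℝ)) -
          ∑ i, C (n i : ℝ) * ∏ j ∈ Finset.univ.erase i, (X + C (n j : ℝ))) := by
  refine Polynomial.eq_of_infinite_eval_eq _ _ ((Set.Ioi_infinite (0:ℝ)).mono ?_)
  intro x hx
  have hx : (0:ℝ) < x := hx
  have hxne : x ≠ 0 := hx.ne'
  have hP : ∀ i, x + (n i : ℝ) ≠ 0 := fun i => by positivity
  simp only [Set.mem_setOf_eq]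
  rw [eval_charpoly']
  simp only [eval_mul, eval_pow, eval_X, eval_sub, eval_add, eval_C, Polynomial.eval_prod,
    Polynomial.eval_finset_sum]
  set A := adjMat (SimpleGraph.completeMultipartiteGraph (fun i => Fin (n i))) with hA
  set M : Matrix ((i : Fin k) × Fin (n i)) ((i : Fin k) × Fin (n i)) ℝ :=
    blockDiagonal' (fun i => x • 1 + Jm (n i)) with hM
  have hsplit : x • (1 : Matrix ((i : Fin k) × Fin (n i)) _ ℝ) - A
      = M + Matrix.replicateCol Unit (fun _ => (-1 : ℝ)) * Matrix.replicateRow Unit (fun _ => (1 : ℝ)) := by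
    apply Matrix.ext
    rintro ⟨i, a⟩ ⟨j, b⟩
    have hcr : (Matrix.replicateCol Unit (fun _ : (i : Fin k) × Fin (n i) => (-1 : ℝ))
          * Matrix.replicateRow Unit (fun _ : (i : Fin k) × Fin (n i) => (1 : ℝ)))
        ⟨i, a⟩ ⟨j, b⟩ = -1 := by
      simp [Matrix.mul_apply]
    rw [Matrix.sub_apply, Matrix.add_apply, hcr, Matrix.smul_apply, hA, adjMat_apply]
    by_cases h : i = j
    · subst h
      rw [hM, blockDiagonal'_apply_eq]
      by_cases hab : a = b
      · subst hab
        simp [Matrix.one_apply, Jm]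
      · have hne : (⟨i, a⟩ : (i : Fin k) × Fin (n i)) ≠ ⟨i, b⟩ := by
          intro hh
          exact hab (eq_of_heq (Sigma.mk.inj_iff.mp hh).2)
        rw [Matrix.one_apply_ne hne]
        simp [Jm, Matrix.add_apply, Matrix.smul_apply, Matrix.one_apply, hab]
    · have hne : (⟨i, a⟩ : (i : Fin k) × Fin (n i)) ≠ ⟨j, b⟩ :=
        fun hh => h (congrArg Sigma.fst hh)
      rw [hM, blockDiagonal'_apply_ne _ _ _ h, Matrix.one_apply_ne hne]
      simp [h]
  have hsum1 : ∑ i, (n i - 1) = (∑ i, n i) - k := by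
    have h : ∑ i, n i = (∑ i, (n i - 1)) + k := by
      calc ∑ i, n i = ∑ i : Fin k, ((n i - 1) + 1) :=
            Finset.sum_congr rfl fun i _ => (Nat.sub_add_cancel (hn i)).symm
        _ = (∑ i, (n i - 1)) + ∑ _i : Fin k, 1 := Finset.sum_add_distrib
        _ = (∑ i, (n i - 1)) + k := by simp
    omega
  have hMdet : M.det = x ^ ((∑ i, n i) - k) * ∏ i, (x + (n i : ℝ)) := by
    rw [hM, det_blockDiagonal'_fin]
    have h : ∀ i : Fin k, ((x • 1 + Jm (n i)).det) = x ^ (n i - 1) * (x + n i) :=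
      fun i => det_blk (n i) (hn i) hxne
    rw [Finset.prod_congr rfl fun i _ => h i, Finset.prod_mul_distrib,
      Finset.prod_pow_eq_pow_sum, hsum1]
  have hMunit : IsUnit M.det := by
    rw [hMdet, isUnit_iff_ne_zero]
    exact mul_ne_zero (pow_ne_zero _ hxne) (Finset.prod_ne_zero_iff.2 fun i _ => hP i)
  have hNinv : M⁻¹ = blockDiagonal'
      (fun i => x⁻¹ • 1 - (x * (x + (n i : ℝ)))⁻¹ • Jm (n i)) := by
    refine Matrix.inv_eq_right_inv ?_
    rw [hM, ← blockDiagonal'_mul]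
    have h : (fun i => (x • 1 + Jm (n i)) * (x⁻¹ • 1 - (x * (x + (n i : ℝ)))⁻¹ • Jm (n i)))
        = fun i => (1 : Matrix (Fin (n i)) (Fin (n i)) ℝ) :=
      funext fun i => blk_mul_iblk (n i) hxne (hP i)
    rw [h]
    exact blockDiagonal'_one
  have hsumN : ∀ (j : Fin k) (b : Fin (n j)), (∑ v, M⁻¹ v ⟨j, b⟩) = (x + (n j : ℝ))⁻¹ := by
    intro j b
    rw [hNinv, ← Finset.univ_sigma_univ, Finset.sum_sigma]
    rw [Finset.sum_eq_single j]
    · simp only [blockDiagonal'_apply_eq, Matrix.sub_apply, Matrix.smul_apply, Jm,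
        Matrix.of_apply, smul_eq_mul, mul_one, Finset.sum_sub_distrib, Finset.sum_const,
        Finset.card_univ, Fintype.card_fin, nsmul_eq_mul]
      have h1 : ∑ s : Fin (n j), x⁻¹ * (1 : Matrix (Fin (n j)) (Fin (n j)) ℝ) s b = x⁻¹ := by
        simp [Matrix.one_apply, Finset.sum_ite_eq']
      rw [h1]
      field_simp
      ring
    · intro i _ hij
      exact Finset.sum_eq_zero fun a _ => blockDiagonal'_apply_ne _ _ _ hij
    · intro h; exact absurd (Finset.mem_univ j) h
  set u : ((i : Fin k) × Fin (n i)) → ℝ := fun _ => (-1:ℝ) with hu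
  set o : ((i : Fin k) × Fin (n i)) → ℝ := fun _ => (1:ℝ) with ho
  have hentry : (Matrix.replicateRow Unit o * M⁻¹ * Matrix.replicateCol Unit u) () ()
      = -∑ j : Fin k, (n j : ℝ) * (x + (n j : ℝ))⁻¹ := by
    rw [Matrix.mul_apply]
    have h1 : ∀ w, (Matrix.replicateRow Unit o * M⁻¹) () w = ∑ v, M⁻¹ v w := by
      intro w; rw [Matrix.mul_apply]; simp [ho]
    calc ∑ w, (Matrix.replicateRow Unit o * M⁻¹) () w * (Matrix.replicateCol Unit u) w ()
        = ∑ w : (i : Fin k) × Fin (n i), (x + (n w.1 : ℝ))⁻¹ * (-1) := by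
          refine Finset.sum_congr rfl fun w _ => ?_
          rw [h1]
          obtain ⟨j, b⟩ := w
          rw [hsumN]
          rfl
      _ = -∑ j : Fin k, (n j : ℝ) * (x + (n j : ℝ))⁻¹ := by
          conv_lhs => rw [← Finset.univ_sigma_univ]
          rw [Finset.sum_sigma, ← Finset.sum_neg_distrib]
          refine Finset.sum_congr rfl fun j _ => ?_
          simp only [Finset.sum_const, Finset.card_univ, Fintype.card_fin, nsmul_eq_mul]
          ring
  have hone : (1 + Matrix.replicateRow Unit o * M⁻¹ * Matrix.replicateCol Unit u).det
      = 1 - ∑ i, (n i : ℝ) * (x + (n i : ℝ))⁻¹ := by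
    rw [Matrix.det_unique, Matrix.add_apply, Matrix.one_apply_eq, hentry]
    ring
  have hdet : (x • (1 : Matrix ((i : Fin k) × Fin (n i)) _ ℝ) - A).det
      = M.det * (1 - ∑ i, (n i : ℝ) * (x + (n i : ℝ))⁻¹) := by
    rw [hsplit, Matrix.det_add_replicateCol_mul_replicateRow hMunit, hone]
  rw [hdet, hMdet, mul_assoc]
  congr 1
  rw [mul_sub, mul_one, Finset.mul_sum]
  congr 1
  refine Finset.sum_congr rfl fun i _ => ?_
  rw [← Finset.mul_prod_erase univ _ (Finset.mem_univ i)]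
  field_simp
end

section
/- Let G be a graph and S, T two disjoint independent sets such that all vertices of S have common neighborhood N(S), all vertices of T have common neighborhood N(T), and there are no edges between S and T. Let G_{S→T} be the graph obtained from G by deleting all edges between S and N(S) and adding all edges between S and N(T), and define G_{T→S} symmetrically. Then λ(G_{S→T}) ≥ λ(G) or λ(G_{T→S}) ≥ λ(G). -/
open Finset
open Matrix

/-- The graph obtained from `G` by rewiring every vertex of the independent set `S`:
all edges from `S` to the rest of the graph are deleted and replaced by all edges from `S`
to `N` (edges not incident to `S` are unchanged). -/
def switchG {V : Type*} (G : SimpleGraph V) (S N : Set V) : SimpleGraph V where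
  Adj u v := (u ∉ S ∧ v ∉ S ∧ G.Adj u v) ∨ (u ∈ S ∧ v ∉ S ∧ v ∈ N) ∨ (v ∈ S ∧ u ∉ S ∧ u ∈ N)
  symm := by
    constructor
    intro u v h
    rcases h with ⟨h1, h2, h3⟩ | ⟨h1, h2, h3⟩ | ⟨h1, h2, h3⟩
    · exact Or.inl ⟨h2, h1, h3.symm⟩
    · exact Or.inr (Or.inr ⟨h1, h2, h3⟩)
    · exact Or.inr (Or.inl ⟨h1, h2, h3⟩)
  loopless := by
    constructor
    intro u h
    rcases h with ⟨_, _, h⟩ | ⟨h1, h2, _⟩ | ⟨h1, h2, _⟩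
    · exact G.loopless.irrefl u h
    · exact h2 h1
    · exact h2 h1

set_option linter.unusedSectionVars false

section spec
variable {V : Type*} [Fintype V] [DecidableEq V]

lemma adjMat_isHermitian (G : SimpleGraph V) : (adjMat G).IsHermitian := by
  classical
  ext i j
  simp [adjMat, Matrix.conjTranspose_apply, SimpleGraph.adjMatrix_apply, SimpleGraph.adj_comm]

lemma quad_expand (G : SimpleGraph V) (x : EuclideanSpace ℝ V) :
    (inner ℝ x (Matrix.toEuclideanLin (adjMat G) x) : ℝ) =
      ∑ i, (adjMat_isHermitian G).eigenvalues i *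
        ((adjMat_isHermitian G).eigenvectorBasis.repr x i)^2 := by
  set hA := adjMat_isHermitian G
  set b := hA.eigenvectorBasis with hb
  have hTb : ∀ i, Matrix.toEuclideanLin (adjMat G) (b i) = hA.eigenvalues i • b i := by
    intro i
    apply (WithLp.equiv 2 (V → ℝ)).injective
    simp only [WithLp.equiv_apply, Matrix.piLp_ofLp_toEuclideanLin]
    have := hA.mulVec_eigenvectorBasis i
    simpa using this
  have hx : ∑ i, b.repr x i • b i = x := b.sum_repr x
  have h2 : Matrix.toEuclideanLin (adjMat G) x
      = ∑ i, ((adjMat_isHermitian G).eigenvalues i * b.repr x i) • b i := by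
    conv_lhs => rw [← hx]
    rw [map_sum]
    refine Finset.sum_congr rfl fun i _ => ?_
    rw [_root_.map_smul, hTb i, smul_smul, mul_comm]
  rw [h2, inner_sum]
  refine Finset.sum_congr rfl fun i _ => ?_
  rw [real_inner_smul_right]
  have : (inner ℝ x (b i) : ℝ) = b.repr x i := by
    rw [real_inner_comm, ← b.repr_apply_apply]
  rw [this]; ring

lemma norm_expand (G : SimpleGraph V) (x : EuclideanSpace ℝ V) :
    (inner ℝ x x : ℝ) = ∑ i, ((adjMat_isHermitian G).eigenvectorBasis.repr x i)^2 := by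
  set b := (adjMat_isHermitian G).eigenvectorBasis
  have := b.repr.inner_map_map x x
  rw [← this, PiLp.inner_apply]
  simp [pow_two]

variable [Nonempty V]

noncomputable def muMax (G : SimpleGraph V) : ℝ :=
  Finset.univ.sup' Finset.univ_nonempty (adjMat_isHermitian G).eigenvalues

lemma quad_le_muMax (G : SimpleGraph V) (x : EuclideanSpace ℝ V) :
    (inner ℝ x (Matrix.toEuclideanLin (adjMat G) x) : ℝ) ≤ muMax G * (inner ℝ x x : ℝ) := by
  rw [quad_expand, norm_expand G, Finset.mul_sum]
  refine Finset.sum_le_sum fun i _ => ?_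
  have h1 : (adjMat_isHermitian G).eigenvalues i ≤ muMax G :=
    Finset.le_sup' _ (Finset.mem_univ i)
  nlinarith [sq_nonneg ((adjMat_isHermitian G).eigenvectorBasis.repr x i)]

lemma spectrum_le_muMax (G : SimpleGraph V) {z : ℝ} (hz : z ∈ spectrum ℝ (adjMat G)) :
    z ≤ muMax G := by
  rw [← Matrix.spectrum_toEuclideanLin (A := adjMat G)] at hz
  have hev : Module.End.HasEigenvalue (Matrix.toEuclideanLin (adjMat G)) z :=
    (Module.End.hasEigenvalue_iff_mem_spectrum).2 hz
  obtain ⟨v, hv⟩ := hev.exists_hasEigenvector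
  have hvTv : (inner ℝ v (Matrix.toEuclideanLin (adjMat G) v) : ℝ) = z * (inner ℝ v v : ℝ) := by
    rw [hv.apply_eq_smul, inner_smul_right]
  have hpos : (0:ℝ) < (inner ℝ v v : ℝ) := by
    rcases lt_or_eq_of_le (real_inner_self_nonneg (x := v)) with h | h
    · exact h
    · exact absurd (inner_self_eq_zero.1 h.symm) hv.2
  have := quad_le_muMax G v
  rw [hvTv] at this
  exact le_of_mul_le_mul_right (by linarith) hpos

lemma specRad_eq_muMax (G : SimpleGraph V) : specRad G = muMax G := by
  have hbdd : BddAbove (spectrum ℝ (adjMat G)) := ⟨muMax G, fun z hz => spectrum_le_muMax G hz⟩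
  have hne : (spectrum ℝ (adjMat G)).Nonempty :=
    ⟨_, (adjMat_isHermitian G).eigenvalues_mem_spectrum_real (Classical.arbitrary V)⟩
  refine le_antisymm (csSup_le hne fun z hz => spectrum_le_muMax G hz) ?_
  obtain ⟨i0, -, hi0⟩ := Finset.exists_max_image Finset.univ (adjMat_isHermitian G).eigenvalues
    Finset.univ_nonempty
  have : muMax G = (adjMat_isHermitian G).eigenvalues i0 := by
    refine le_antisymm (Finset.sup'_le _ _ fun i _ => hi0 i (Finset.mem_univ i))
      (Finset.le_sup' _ (Finset.mem_univ i0))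
  rw [this]
  exact le_csSup hbdd ((adjMat_isHermitian G).eigenvalues_mem_spectrum_real i0)


lemma inner_coord (G : SimpleGraph V) (x : V → ℝ) :
    (inner ℝ ((WithLp.equiv 2 (V → ℝ)).symm x)
      (Matrix.toEuclideanLin (adjMat G) ((WithLp.equiv 2 (V → ℝ)).symm x)) : ℝ)
      = ∑ u, ∑ v, adjMat G u v * x u * x v := by
  rw [Matrix.toEuclideanLin_apply, PiLp.inner_apply]
  simp only [WithLp.equiv_symm_apply, PiLp.toLp_apply, Matrix.mulVec, dotProduct,
    RCLike.inner_apply, conj_trivial, Equiv.apply_symm_apply]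
  rw [Finset.sum_congr rfl (fun u _ => Finset.sum_mul ..)]
  refine Finset.sum_congr rfl fun u _ => Finset.sum_congr rfl fun v _ => by ring

lemma inner_self_coord (x : V → ℝ) :
    (inner ℝ ((WithLp.equiv 2 (V → ℝ)).symm x) ((WithLp.equiv 2 (V → ℝ)).symm x) : ℝ)
      = ∑ u, x u ^ 2 := by
  rw [PiLp.inner_apply]
  simp [pow_two]

lemma rayleigh_le (G : SimpleGraph V) (x : V → ℝ) :
    (∑ u, ∑ v, adjMat G u v * x u * x v) ≤ specRad G * ∑ u, x u ^ 2 := by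
  rw [specRad_eq_muMax, ← inner_coord, ← inner_self_coord]
  exact quad_le_muMax G _

lemma exists_eigvec (G : SimpleGraph V) :
    ∃ x : V → ℝ, (∑ u, x u ^ 2) = 1 ∧
      (∑ u, ∑ v, adjMat G u v * x u * x v) = specRad G := by
  obtain ⟨i0, -, hi0⟩ := Finset.exists_max_image Finset.univ (adjMat_isHermitian G).eigenvalues
    Finset.univ_nonempty
  have hmx : muMax G = (adjMat_isHermitian G).eigenvalues i0 :=
    le_antisymm (Finset.sup'_le _ _ fun i _ => hi0 i (Finset.mem_univ i))
      (Finset.le_sup' _ (Finset.mem_univ i0))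
  set b := (adjMat_isHermitian G).eigenvectorBasis
  refine ⟨⇑(b i0), ?_, ?_⟩
  · rw [← inner_self_coord]
    have : (WithLp.equiv 2 (V → ℝ)).symm ⇑(b i0) = b i0 := rfl
    rw [this, norm_expand G, b.repr_self]
    simp [EuclideanSpace.single_apply, pow_two]
  · rw [← inner_coord]
    have : (WithLp.equiv 2 (V → ℝ)).symm ⇑(b i0) = b i0 := rfl
    rw [this, quad_expand, specRad_eq_muMax, hmx, b.repr_self]
    simp [EuclideanSpace.single_apply, pow_two]

end spec

section comb
variable {V : Type*} [Fintype V] [DecidableEq V]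

noncomputable def chi (P : Set V) (u : V) : ℝ :=
  letI := Classical.propDecidable (u ∈ P); if u ∈ P then 1 else 0

lemma chi_of_mem {P : Set V} {u : V} (h : u ∈ P) : chi P u = 1 := by simp [chi, h]
lemma chi_of_not_mem {P : Set V} {u : V} (h : u ∉ P) : chi P u = 0 := by simp [chi, h]
lemma chi_nonneg (P : Set V) (u : V) : 0 ≤ chi P u := by
  unfold chi; split <;> norm_num

lemma adjMat_one {G : SimpleGraph V} {u v : V} (h : G.Adj u v) : adjMat G u v = 1 := by
  classical
  simp [adjMat, h]
lemma adjMat_zero {G : SimpleGraph V} {u v : V} (h : ¬ G.Adj u v) : adjMat G u v = 0 := by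
  classical
  simp [adjMat, h]

lemma switch_pointwise (G : SimpleGraph V) (S NS N : Set V)
    (hNS : ∀ u ∈ S, G.neighborSet u = NS) (hNSS : ∀ v ∈ NS, v ∉ S)
    (hNI : ∀ v ∈ N, v ∉ S) (u v : V) :
    adjMat (switchG G S N) u v =
      adjMat G u v + chi S u * (chi N v - chi NS v) + chi S v * (chi N u - chi NS u) := by
  have memNS : ∀ w ∈ S, ∀ z, G.Adj w z ↔ z ∈ NS := by
    intro w hw z
    rw [← hNS w hw]; rfl
  by_cases hu : u ∈ S <;> by_cases hv : v ∈ S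
  · -- both in S
    have h1 : ¬ (switchG G S N).Adj u v := by
      rintro (⟨h, _, _⟩ | ⟨_, h, _⟩ | ⟨_, h, _⟩) <;> [exact h hu; exact h hv; exact h hu]
    have h2 : ¬ G.Adj u v := fun h => hNSS v ((memNS u hu v).1 h) hv
    rw [adjMat_zero h1, adjMat_zero h2, chi_of_mem hu, chi_of_mem hv,
      chi_of_not_mem (fun h => hNI v h hv), chi_of_not_mem (fun h => hNSS v h hv),
      chi_of_not_mem (fun h => hNI u h hu), chi_of_not_mem (fun h => hNSS u h hu)]
    ring
  · -- u ∈ S, v ∉ S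
    have h2 : adjMat G u v = chi NS v := by
      by_cases h : v ∈ NS
      · rw [adjMat_one ((memNS u hu v).2 h), chi_of_mem h]
      · rw [adjMat_zero (fun ha => h ((memNS u hu v).1 ha)), chi_of_not_mem h]
    have h1 : adjMat (switchG G S N) u v = chi N v := by
      by_cases h : v ∈ N
      · rw [adjMat_one (Or.inr (Or.inl ⟨hu, hv, h⟩)), chi_of_mem h]
      · refine (adjMat_zero ?_).trans (chi_of_not_mem h).symm
        rintro (⟨hb, _, _⟩ | ⟨_, _, hb⟩ | ⟨hb, _, _⟩) <;> [exact hb hu; exact h hb; exact hv hb]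
    rw [h1, h2, chi_of_mem hu, chi_of_not_mem hv]
    ring
  · -- u ∉ S, v ∈ S
    have h2 : adjMat G u v = chi NS u := by
      by_cases h : u ∈ NS
      · rw [adjMat_one ((memNS v hv u).2 h).symm, chi_of_mem h]
      · rw [adjMat_zero (fun ha => h ((memNS v hv u).1 ha.symm)), chi_of_not_mem h]
    have h1 : adjMat (switchG G S N) u v = chi N u := by
      by_cases h : u ∈ N
      · rw [adjMat_one (Or.inr (Or.inr ⟨hv, hu, h⟩)), chi_of_mem h]
      · refine (adjMat_zero ?_).trans (chi_of_not_mem h).symm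
        rintro (⟨_, hb, _⟩ | ⟨hb, _, _⟩ | ⟨_, _, hb⟩) <;> [exact hb hv; exact hu hb; exact h hb]
    rw [h1, h2, chi_of_mem hv, chi_of_not_mem hu]
    ring
  · -- neither
    have h1 : adjMat (switchG G S N) u v = adjMat G u v := by
      by_cases h : G.Adj u v
      · rw [adjMat_one (Or.inl ⟨hu, hv, h⟩), adjMat_one h]
      · refine (adjMat_zero ?_).trans (adjMat_zero h).symm
        rintro (⟨_, _, hb⟩ | ⟨hb, _, _⟩ | ⟨hb, _, _⟩) <;> [exact h hb; exact hu hb; exact hv hb]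
    rw [h1, chi_of_not_mem hu, chi_of_not_mem hv]
    ring

lemma q_switch (G : SimpleGraph V) (S NS N : Set V)
    (hNS : ∀ u ∈ S, G.neighborSet u = NS) (hNSS : ∀ v ∈ NS, v ∉ S)
    (hNI : ∀ v ∈ N, v ∉ S) (y : V → ℝ) :
    (∑ u, ∑ v, adjMat (switchG G S N) u v * y u * y v) =
      (∑ u, ∑ v, adjMat G u v * y u * y v) +
      2 * (∑ u, chi S u * y u) * (∑ v, (chi N v - chi NS v) * y v) := by
  have key : ∀ u v, adjMat (switchG G S N) u v * y u * y v =
      adjMat G u v * y u * y v + (chi S u * y u) * ((chi N v - chi NS v) * y v)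
        + ((chi N u - chi NS u) * y u) * (chi S v * y v) := by
    intro u v
    rw [switch_pointwise G S NS N hNS hNSS hNI u v]
    ring
  simp_rw [key]
  simp only [Finset.sum_add_distrib]
  rw [← Finset.sum_mul_sum, ← Finset.sum_mul_sum]
  ring

end comb

/-- Let `S`, `T` be disjoint independent sets of `G`, all vertices of `S` (resp. `T`)
having the same neighborhood `NS` (resp. `NT`), with no edges between `S` and `T`.
Then switching `S → T` or switching `T → S` does not decrease the spectral radius. -/
theorem switch_specRad_ge {V : Type*} [Fintype V] [DecidableEq V] (G : SimpleGraph V)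
    (S T NS NT : Set V) (hdisj : Disjoint S T)
    (hSind : ∀ u ∈ S, ∀ v ∈ S, ¬ G.Adj u v)
    (hTind : ∀ u ∈ T, ∀ v ∈ T, ¬ G.Adj u v)
    (hNS : ∀ u ∈ S, G.neighborSet u = NS)
    (hNT : ∀ v ∈ T, G.neighborSet v = NT)
    (hST : ∀ u ∈ S, ∀ v ∈ T, ¬ G.Adj u v) :
    specRad G ≤ specRad (switchG G S NT) ∨ specRad G ≤ specRad (switchG G T NS) := by
  classical
  rcases Set.eq_empty_or_nonempty S with hSe | ⟨s0, hs0⟩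
  · left
    have hG : switchG G S NT = G := by
      ext u v
      simp [switchG, hSe]
    rw [hG]
  rcases Set.eq_empty_or_nonempty T with hTe | ⟨t0, ht0⟩
  · right
    have hG : switchG G T NS = G := by
      ext u v
      simp [switchG, hTe]
    rw [hG]
  haveI : Nonempty V := ⟨s0⟩
  have hadjS : ∀ v, v ∈ NS ↔ G.Adj s0 v := by
    intro v; rw [← hNS s0 hs0]; rfl
  have hadjT : ∀ v, v ∈ NT ↔ G.Adj t0 v := by
    intro v; rw [← hNT t0 ht0]; rfl
  have hNSS : ∀ v ∈ NS, v ∉ S := fun v hv hvS => hSind s0 hs0 v hvS ((hadjS v).1 hv)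
  have hNST : ∀ v ∈ NS, v ∉ T := fun v hv hvT => hST s0 hs0 v hvT ((hadjS v).1 hv)
  have hNTT : ∀ v ∈ NT, v ∉ T := fun v hv hvT => hTind t0 ht0 v hvT ((hadjT v).1 hv)
  have hNTS : ∀ v ∈ NT, v ∉ S := fun v hv hvS => hST v hvS t0 ht0 ((hadjT v).1 hv).symm
  obtain ⟨x, hx1, hx2⟩ := exists_eigvec G
  set y : V → ℝ := fun u => |x u| with hy
  have hy1 : ∑ u, y u ^ 2 = 1 := by simpa [hy, sq_abs] using hx1
  have hynn : ∀ u, 0 ≤ y u := fun u => abs_nonneg _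
  have hyG : specRad G ≤ ∑ u, ∑ v, adjMat G u v * y u * y v := by
    rw [← hx2]
    refine Finset.sum_le_sum fun u _ => Finset.sum_le_sum fun v _ => ?_
    have hnn : 0 ≤ adjMat G u v := by
      by_cases h : G.Adj u v
      · rw [adjMat_one h]; norm_num
      · rw [adjMat_zero h]
    calc adjMat G u v * x u * x v ≤ |adjMat G u v * x u * x v| := le_abs_self _
      _ = adjMat G u v * y u * y v := by
          rw [abs_mul, abs_mul, abs_of_nonneg hnn]
  have hq1 := q_switch G S NS NT hNS hNSS hNTS y
  have hq2 := q_switch G T NT NS hNT hNTT hNST y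
  set σS := ∑ u, chi S u * y u with hσS
  set σT := ∑ u, chi T u * y u with hσT
  set d := ∑ v, (chi NT v - chi NS v) * y v with hd
  have hσSnn : 0 ≤ σS :=
    Finset.sum_nonneg fun u _ => mul_nonneg (chi_nonneg _ _) (hynn u)
  have hσTnn : 0 ≤ σT :=
    Finset.sum_nonneg fun u _ => mul_nonneg (chi_nonneg _ _) (hynn u)
  have hneg : (∑ v, (chi NS v - chi NT v) * y v) = -d := by
    rw [hd, ← Finset.sum_neg_distrib]
    exact Finset.sum_congr rfl fun v _ => by ring
  rw [hneg] at hq2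
  rcases le_or_gt 0 d with hdpos | hdneg
  · left
    have h1 : specRad G ≤ ∑ u, ∑ v, adjMat (switchG G S NT) u v * y u * y v := by
      rw [hq1]
      nlinarith [mul_nonneg hσSnn hdpos]
    have h2 := rayleigh_le (switchG G S NT) y
    rw [hy1, mul_one] at h2
    linarith
  · right
    have h1 : specRad G ≤ ∑ u, ∑ v, adjMat (switchG G T NS) u v * y u * y v := by
      rw [hq2]
      nlinarith [mul_nonneg hσTnn (le_of_lt (neg_pos.2 hdneg))]
    have h2 := rayleigh_le (switchG G T NS) y
    rw [hy1, mul_one] at h2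
    linarith
end

section
/- Let G̃ = K_{b_1,...,b_{k-1}} ∨ (\overline{K_a} ∪ K_{a_1}) with parameters satisfying 3 ≤ a_1 ≤ 2s+1 (a_1 odd), 1 ≤ b_i ≤ s for all i, ∑ b_i ≤ s, and a ≥ 4s² + 6s − 1. Then the spectral radius of G̃ is strictly greater than a_1. -/
open Finset

/-- The join `G ∨ H` of two graphs on disjoint vertex sets. -/
def joinGraph {α β : Type*} (G : SimpleGraph α) (H : SimpleGraph β) :
    SimpleGraph (α ⊕ β) where
  Adj x y :=
    match x, y with
    | Sum.inl a, Sum.inl a' => G.Adj a a'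
    | Sum.inr b, Sum.inr b' => H.Adj b b'
    | _, _ => True
  symm := by constructor; rintro (a | b) (a' | b') h
             · exact h.symm
             · trivial
             · trivial
             · exact h.symm
  loopless := by constructor; rintro (a | b) h
                 · exact G.loopless.irrefl a h
                 · exact H.loopless.irrefl b h

/-- The disjoint union `G ∪ H` of two graphs. -/
def unionGraph {α β : Type*} (G : SimpleGraph α) (H : SimpleGraph β) :
    SimpleGraph (α ⊕ β) where
  Adj x y :=
    match x, y with
    | Sum.inl a, Sum.inl a' => G.Adj a a'
    | Sum.inr b, Sum.inr b' => H.Adj b b'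
    | _, _ => False
  symm := by constructor; rintro (a | b) (a' | b') h
             · exact h.symm
             · exact h.elim
             · exact h.elim
             · exact h.symm
  loopless := by constructor; rintro (a | b) h
                 · exact G.loopless.irrefl a h
                 · exact H.loopless.irrefl b h

/-- `Gtilde b a a₁ = K_{b 1, …, b (k-1)} ∨ (∁K_a ∪ K_{a₁})`: the join of a complete
multipartite graph with the disjoint union of an independent set of size `a`
and a clique of size `a₁`. -/
def Gtilde {m : ℕ} (b : Fin m → ℕ) (a a₁ : ℕ) :
    SimpleGraph ((Σ i : Fin m, Fin (b i)) ⊕ (Fin a ⊕ Fin a₁)) :=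
  joinGraph (SimpleGraph.completeMultipartiteGraph (fun i => Fin (b i)))
    (unionGraph (⊥ : SimpleGraph (Fin a)) (⊤ : SimpleGraph (Fin a₁)))

lemma rayleigh_lt_specRad {V : Type*} [Fintype V] [DecidableEq V] (G : SimpleGraph V)
    (x : EuclideanSpace ℝ V) (hx : x ≠ 0) (c : ℝ)
    (h : c * ‖x‖ ^ 2 < inner ℝ ((Matrix.toEuclideanLin (adjMat G)) x) x) :
    c < specRad G := by
  classical
  set A := adjMat G with hA
  have hHerm : A.IsHermitian := by
    have : A.IsSymm := by
      simp [hA, adjMat, Matrix.IsSymm]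
    exact (Matrix.conjTranspose_eq_transpose_of_trivial A).trans this
  set T := Matrix.toEuclideanLin A with hT
  have hsymm : T.IsSymmetric := Matrix.isHermitian_iff_isSymmetric.mp hHerm
  haveI : Nontrivial (EuclideanSpace ℝ V) := nontrivial_of_ne x 0 hx
  have hEig := hsymm.hasEigenvalue_iSup_of_finiteDimensional
  set μ : ℝ := ⨆ y : {y : EuclideanSpace ℝ V // y ≠ 0},
      RCLike.re (inner ℝ (T y) (y : EuclideanSpace ℝ V) : ℝ) / ‖(y : EuclideanSpace ℝ V)‖ ^ 2 with hμ
  have hmem : μ ∈ spectrum ℝ A := by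
    rw [← Matrix.spectrum_toEuclideanLin (A := A)]
    exact (Module.End.hasEigenvalue_iff_mem_spectrum.mp hEig)
  have hxnorm : (0:ℝ) < ‖x‖ ^ 2 := pow_pos (norm_pos_iff.mpr hx) 2
  have hbdd : BddAbove (Set.range fun y : {y : EuclideanSpace ℝ V // y ≠ 0} =>
      RCLike.re (inner ℝ (T y) (y : EuclideanSpace ℝ V) : ℝ) / ‖(y : EuclideanSpace ℝ V)‖ ^ 2) := by
    refine ⟨‖LinearMap.toContinuousLinearMap T‖, ?_⟩
    rintro r ⟨y, rfl⟩
    have hy : (0:ℝ) < ‖(y : EuclideanSpace ℝ V)‖ ^ 2 := pow_pos (norm_pos_iff.mpr y.2) 2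
    rw [div_le_iff₀ hy]
    have h1 : (inner ℝ (T y) (y : EuclideanSpace ℝ V) : ℝ) ≤ ‖T y‖ * ‖(y : EuclideanSpace ℝ V)‖ :=
      real_inner_le_norm _ _
    have h2 : ‖T (y : EuclideanSpace ℝ V)‖ ≤ ‖LinearMap.toContinuousLinearMap T‖ * ‖(y : EuclideanSpace ℝ V)‖ :=
      (LinearMap.toContinuousLinearMap T).le_opNorm _
    have hy0 : (0:ℝ) ≤ ‖(y : EuclideanSpace ℝ V)‖ := norm_nonneg _
    calc RCLike.re (inner ℝ (T y) (y : EuclideanSpace ℝ V) : ℝ)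
        = (inner ℝ (T y) (y : EuclideanSpace ℝ V) : ℝ) := rfl
      _ ≤ ‖T y‖ * ‖(y : EuclideanSpace ℝ V)‖ := h1
      _ ≤ (‖LinearMap.toContinuousLinearMap T‖ * ‖(y : EuclideanSpace ℝ V)‖) * ‖(y : EuclideanSpace ℝ V)‖ :=
          mul_le_mul_of_nonneg_right h2 hy0
      _ = ‖LinearMap.toContinuousLinearMap T‖ * ‖(y : EuclideanSpace ℝ V)‖ ^ 2 := by ring
  have hle : (inner ℝ (T x) x : ℝ) / ‖x‖ ^ 2 ≤ μ := le_ciSup hbdd ⟨x, hx⟩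
  have hclt : c < (inner ℝ (T x) x : ℝ) / ‖x‖ ^ 2 := by
    rw [lt_div_iff₀ hxnorm]
    exact h
  have hμle : μ ≤ specRad G := by
    have hfin : (spectrum ℝ A).Finite := Matrix.finite_spectrum A
    exact le_csSup hfin.bddAbove hmem
  linarith


/-- For `G̃ = K_{b_1,…,b_{k-1}} ∨ (∁K_a ∪ K_{a₁})` with `3 ≤ a₁ ≤ 2s + 1` odd,
`1 ≤ b i ≤ s`, `∑ b i ≤ s` and `a ≥ 4s² + 6s - 1`, the spectral radius of `G̃`
is strictly greater than `a₁`. -/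
theorem a1_lt_specRad_Gtilde (k s a a₁ : ℕ) (hk : 2 ≤ k) (b : Fin (k - 1) → ℕ)
    (ha₁ : 3 ≤ a₁) (ha₁' : a₁ ≤ 2 * s + 1) (hodd : Odd a₁)
    (hb : ∀ i, 1 ≤ b i ∧ b i ≤ s) (hbsum : ∑ i, b i ≤ s)
    (ha : 4 * s ^ 2 + 6 * s - 1 ≤ a) :
    (a₁ : ℝ) < specRad (Gtilde b a a₁) := by
  classical
  -- arithmetic facts
  have hs1 : 1 ≤ s := by omega
  have haa : a₁ ^ 2 ≤ a := by
    have h1 : a₁ ^ 2 ≤ (2 * s + 1) ^ 2 := Nat.pow_le_pow_left ha₁' 2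
    have e : (2 * s + 1) ^ 2 = 4 * s ^ 2 + 4 * s + 1 := by ring
    have h2 : ∀ t, 4 * t + 4 * s + 1 ≤ 4 * t + 6 * s - 1 := fun t => by omega
    have h3 := h2 (s ^ 2)
    omega
  -- the distinguished vertex
  have hk1 : 0 < k - 1 := by omega
  set i₀ : Fin (k - 1) := ⟨0, hk1⟩ with hi₀
  set u : Σ i : Fin (k - 1), Fin (b i) := ⟨i₀, ⟨0, (hb i₀).1⟩⟩ with hu
  obtain ⟨xf, hxfl, hxfr⟩ :
      ∃ xf : ((Σ i : Fin (k - 1), Fin (b i)) ⊕ (Fin a ⊕ Fin a₁)) → ℝ,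
        (∀ w, xf (Sum.inl w) = if w = u then (a₁ : ℝ) else 0) ∧
        (∀ p, xf (Sum.inr p) = 1) :=
    ⟨fun v => match v with
      | Sum.inl w => if w = u then (a₁ : ℝ) else 0
      | Sum.inr _ => 1, fun w => rfl, fun p => rfl⟩
  set x₀ : EuclideanSpace ℝ ((Σ i : Fin (k - 1), Fin (b i)) ⊕ (Fin a ⊕ Fin a₁)) := (WithLp.equiv 2 (((Σ i : Fin (k - 1), Fin (b i)) ⊕ (Fin a ⊕ Fin a₁)) → ℝ)).symm xf with hx₀
  set A := adjMat (Gtilde b a a₁) with hA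
  -- entry lemmas
  have hA12 : ∀ (w : Σ i : Fin (k - 1), Fin (b i)) (p : Fin a ⊕ Fin a₁),
      A (Sum.inl w) (Sum.inr p) = 1 := by
    intro w p
    simp [hA, adjMat, Gtilde, joinGraph]
  have hA11 : ∀ (w w' : Σ i : Fin (k - 1), Fin (b i)),
      A (Sum.inl w) (Sum.inl w') = if w.1 ≠ w'.1 then 1 else 0 := by
    intro w w'
    simp [hA, adjMat, Gtilde, joinGraph]
  have hA21 : ∀ (p : Fin a ⊕ Fin a₁) (w : Σ i : Fin (k - 1), Fin (b i)),
      A (Sum.inr p) (Sum.inl w) = 1 := by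
    intro p w
    simp [hA, adjMat, Gtilde, joinGraph]
  have hA2l : ∀ (q : Fin a) (p : Fin a ⊕ Fin a₁),
      A (Sum.inr (Sum.inl q)) (Sum.inr p) = 0 := by
    intro q p
    cases p <;> simp [hA, adjMat, Gtilde, joinGraph, unionGraph]
  have hA2rl : ∀ (q : Fin a₁) (q' : Fin a),
      A (Sum.inr (Sum.inr q)) (Sum.inr (Sum.inl q')) = 0 := by
    intro q q'
    simp [hA, adjMat, Gtilde, joinGraph, unionGraph]
  have hA2rr : ∀ (q q' : Fin a₁),
      A (Sum.inr (Sum.inr q)) (Sum.inr (Sum.inr q')) = if q = q' then 0 else 1 := by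
    intro q q'
    by_cases h : q = q' <;> simp [hA, adjMat, Gtilde, joinGraph, unionGraph, h]
  -- mulVec values
  have hm1 : (A.mulVec xf) (Sum.inl u) = a + a₁ := by
    show ∑ v, A (Sum.inl u) v * xf v = _
    rw [Fintype.sum_sum_type]
    have hl : ∑ w : Σ i : Fin (k - 1), Fin (b i),
        A (Sum.inl u) (Sum.inl w) * xf (Sum.inl w) = 0 := by
      apply Finset.sum_eq_zero
      intro w _
      by_cases hw : w = u
      · subst hw
        simp [hA11]
      · simp [hxfl, hw]
    have hr : ∑ p : Fin a ⊕ Fin a₁,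
        A (Sum.inl u) (Sum.inr p) * xf (Sum.inr p) = a + a₁ := by
      simp [hA12, hxfr]
    rw [hl, hr, zero_add]
  have hm2 : ∀ q : Fin a, (A.mulVec xf) (Sum.inr (Sum.inl q)) = a₁ := by
    intro q
    show ∑ v, A (Sum.inr (Sum.inl q)) v * xf v = _
    rw [Fintype.sum_sum_type]
    have hl : ∑ w : Σ i : Fin (k - 1), Fin (b i),
        A (Sum.inr (Sum.inl q)) (Sum.inl w) * xf (Sum.inl w) = a₁ := by
      simp [hA21, hxfl, Finset.sum_ite_eq']
    have hr : ∑ p : Fin a ⊕ Fin a₁,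
        A (Sum.inr (Sum.inl q)) (Sum.inr p) * xf (Sum.inr p) = 0 := by
      simp [hA2l]
    rw [hl, hr, add_zero]
  have hm3 : ∀ q : Fin a₁, (A.mulVec xf) (Sum.inr (Sum.inr q)) = a₁ + ((a₁ : ℝ) - 1) := by
    intro q
    show ∑ v, A (Sum.inr (Sum.inr q)) v * xf v = _
    rw [Fintype.sum_sum_type]
    have hl : ∑ w : Σ i : Fin (k - 1), Fin (b i),
        A (Sum.inr (Sum.inr q)) (Sum.inl w) * xf (Sum.inl w) = a₁ := by
      simp [hA21, hxfl, Finset.sum_ite_eq']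
    have hr : ∑ p : Fin a ⊕ Fin a₁,
        A (Sum.inr (Sum.inr q)) (Sum.inr p) * xf (Sum.inr p) = (a₁ : ℝ) - 1 := by
      rw [Fintype.sum_sum_type]
      have h1 : ∑ q' : Fin a,
          A (Sum.inr (Sum.inr q)) (Sum.inr (Sum.inl q')) * xf (Sum.inr (Sum.inl q')) = 0 := by
        simp [hA2rl]
      have h2 : ∑ q' : Fin a₁,
          A (Sum.inr (Sum.inr q)) (Sum.inr (Sum.inr q')) * xf (Sum.inr (Sum.inr q')) =
          (a₁ : ℝ) - 1 := by
        have hite : ∀ q' : Fin a₁, (if q = q' then (0:ℝ) else 1) = 1 - (if q = q' then 1 else 0) := by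
          intro q'; split <;> ring
        simp only [hA2rr, hxfr, mul_one, hite]
        rw [Finset.sum_sub_distrib]
        simp [Finset.sum_ite_eq]
      rw [h1, h2, zero_add]
    rw [hl, hr]
  -- the quadratic form
  have hinner : (inner ℝ ((Matrix.toEuclideanLin A) x₀) x₀ : ℝ) = ∑ v, (A.mulVec xf) v * xf v := by
    rw [hx₀, WithLp.equiv_symm_apply, Matrix.toEuclideanLin_apply_piLp_toLp]
    simp [PiLp.inner_apply, RCLike.inner_apply, conj_trivial, WithLp.equiv_symm_apply, mul_comm]
  have hsplit : ∑ v, (A.mulVec xf) v * xf v =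
      (a + a₁ : ℝ) * a₁ + ((a : ℝ) * a₁ + a₁ * (a₁ + ((a₁ : ℝ) - 1))) := by
    rw [Fintype.sum_sum_type]
    have hl : ∑ w : Σ i : Fin (k - 1), Fin (b i),
        (A.mulVec xf) (Sum.inl w) * xf (Sum.inl w) = (a + a₁ : ℝ) * a₁ := by
      simp only [hxfl, mul_ite, mul_zero, Finset.sum_ite_eq', Finset.mem_univ, if_true]
      rw [hm1]
    have hr : ∑ p : Fin a ⊕ Fin a₁, (A.mulVec xf) (Sum.inr p) * xf (Sum.inr p) =
        (a : ℝ) * a₁ + a₁ * (a₁ + ((a₁ : ℝ) - 1)) := by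
      rw [Fintype.sum_sum_type]
      simp only [hm2, hm3, hxfr, mul_one]
      simp [Finset.sum_const, Finset.card_univ]
      ring
    rw [hl, hr]
  -- the norm
  have hnorm : ‖x₀‖ ^ 2 = (a₁ : ℝ) ^ 2 + ((a : ℝ) + a₁) := by
    rw [← real_inner_self_eq_norm_sq]
    have : (inner ℝ x₀ x₀ : ℝ) = ∑ v, xf v * xf v := by
      rw [hx₀]
      rw [PiLp.inner_apply]
      exact Finset.sum_congr rfl fun v _ => by simp [RCLike.inner_apply, conj_trivial, WithLp.equiv_symm_apply, sq]
    rw [this, Fintype.sum_sum_type]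
    have hl : ∑ w : Σ i : Fin (k - 1), Fin (b i), xf (Sum.inl w) * xf (Sum.inl w) =
        (a₁ : ℝ) ^ 2 := by
      simp only [hxfl, mul_ite, mul_zero, ite_mul, zero_mul, Finset.sum_ite_eq',
        Finset.mem_univ, if_true]
      ring
    have hr : ∑ p : Fin a ⊕ Fin a₁, xf (Sum.inr p) * xf (Sum.inr p) = (a : ℝ) + a₁ := by
      simp only [hxfr, mul_one]
      rw [Fintype.sum_sum_type]
      simp
    rw [hl, hr]
  -- x₀ ≠ 0
  have ha₁pos : 0 < a₁ := by omega
  have hx0ne : x₀ ≠ 0 := by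
    intro h
    have h1 : xf (Sum.inr (Sum.inr ⟨0, ha₁pos⟩)) = 0 := congrArg (fun y : EuclideanSpace ℝ _ => y (Sum.inr (Sum.inr (⟨0, ha₁pos⟩ : Fin a₁)))) h
    rw [hxfr] at h1
    exact one_ne_zero h1
  -- conclude
  refine rayleigh_lt_specRad _ x₀ hx0ne _ ?_
  rw [← hA, hinner, hsplit, hnorm]
  have haa' : (a₁ : ℝ) ^ 2 ≤ a := by exact_mod_cast haa
  have ha₁3 : (3 : ℝ) ≤ a₁ := by exact_mod_cast ha₁
  nlinarith [haa', ha₁3]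
end
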